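/- Let V = {1,…,n} and let 𝓗 ⊆ 2^V be a hypergraph with 𝓗 ≠ ∅ and ∅ ∉ 𝓗. If 𝓗 is a JM hypergraph, then 𝓗 is minimal transversal-free. -/

import Mathlib

open Finset

/-- An `H`-move in hypergraph NIM: strictly decrease every pile in `H`, keep others. -/
def HMove {n : ℕ} (H : Finset (Fin n)) (x x' : Fin n → ℕ) : Prop :=
  (∀ i ∈ H, x' i < x i) ∧ ∀ i ∉ H, x' i = x i

/-- A move in `NIM_𝓗`: an `H`-move for some hyperedge `H ∈ 𝓗`. -/
def Move {n : ℕ} (F : Set (Finset (Fin n))) (x x' : Fin n → ℕ) : Prop :=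
  ∃ H ∈ F, HMove H x x'

/-- Minimal excludant of a set of naturals. -/
noncomputable def mex (S : Set ℕ) : ℕ := sInf {g : ℕ | g ∉ S}

/-- The Sprague–Grundy function of `NIM_𝓗`, defined by well-founded recursion.
(The guard `∑ x' < ∑ x` is automatic whenever `∅ ∉ 𝓗`.) -/
noncomputable def grundy {n : ℕ} (F : Set (Finset (Fin n))) (x : Fin n → ℕ) : ℕ :=
  mex {g : ℕ | ∃ x', ∃ _h : Move F x x' ∧ (∑ i, x' i) < ∑ i, x i, grundy F x' = g}
termination_by ∑ i, x i
decreasing_by exact _h.2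

/-- `N` consecutive moves are possible from `x`: there are hyperedges `H¹,…,H^N ∈ 𝓗`
whose partial sums of characteristic vectors stay `≤ x`. -/
def TetrisReach {n : ℕ} (F : Set (Finset (Fin n))) (x : Fin n → ℕ) (N : ℕ) : Prop :=
  ∃ f : ℕ → Finset (Fin n), (∀ j < N, f j ∈ F) ∧
    ∀ j < N, ∀ i, (∑ l ∈ Finset.range (j + 1), if i ∈ f l then 1 else 0) ≤ x i

/-- The Tetris function: the largest `N` with `TetrisReach`. -/
noncomputable def tetris {n : ℕ} (F : Set (Finset (Fin n))) (x : Fin n → ℕ) : ℕ :=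
  sSup {N | TetrisReach F x N}

/-- `m(x)`: the minimum pile size. -/
noncomputable def mval {n : ℕ} (x : Fin n → ℕ) : ℕ := sInf (Set.range x)

/-- `y_𝓗(x) = 𝒯_𝓗(x − m(x)e) + 1`. -/
noncomputable def yval {n : ℕ} (F : Set (Finset (Fin n))) (x : Fin n → ℕ) : ℕ :=
  tetris F (fun i => x i - mval x) + 1

/-- `v_𝓗(x)`. -/
noncomputable def vval {n : ℕ} (F : Set (Finset (Fin n))) (x : Fin n → ℕ) : ℕ :=
  Nat.choose (yval F x) 2 + ((mval x - Nat.choose (yval F x) 2 - 1) % yval F x)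

/-- A position is long if `m(x) ≤ C(y_𝓗(x), 2)`. -/
noncomputable def IsLong {n : ℕ} (F : Set (Finset (Fin n))) (x : Fin n → ℕ) : Prop :=
  mval x ≤ Nat.choose (yval F x) 2

/-- The Jenkyns–Mayberry function `𝒰_𝓗`. -/
noncomputable def jmU {n : ℕ} (F : Set (Finset (Fin n))) (x : Fin n → ℕ) : ℕ :=
  if mval x ≤ Nat.choose (yval F x) 2 then tetris F x else vval F x

/-- `𝓗` is a JM hypergraph if its SG function is given by the JM formula. -/
def IsJM {n : ℕ} (F : Set (Finset (Fin n))) : Prop :=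
  ∀ x : Fin n → ℕ, grundy F x = jmU F x

/-- `T` is a transversal of `𝓗` if it meets every hyperedge. -/
def IsTransversal {n : ℕ} (F : Set (Finset (Fin n))) (T : Finset (Fin n)) : Prop :=
  ∀ H ∈ F, (T ∩ H).Nonempty

/-- `𝓗` is transversal-free if no hyperedge is a transversal. -/
def TransversalFree {n : ℕ} (F : Set (Finset (Fin n))) : Prop :=
  ∀ H ∈ F, ¬ IsTransversal F H

/-- The induced subhypergraph `𝓗_S`. -/
def inducedH {n : ℕ} (F : Set (Finset (Fin n))) (S : Finset (Fin n)) : Set (Finset (Fin n)) :=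
  {H | H ∈ F ∧ H ⊆ S}

/-- `𝓗` is minimal transversal-free. -/
def MinTransversalFree {n : ℕ} (F : Set (Finset (Fin n))) : Prop :=
  TransversalFree F ∧
    ∀ S : Finset (Fin n), S ⊂ Finset.univ → (inducedH F S).Nonempty →
      ¬ TransversalFree (inducedH F S)

/-- The symmetric hypergraph `𝓗(λ)` of a spectrum `λ₁ < ⋯ < λ_k` (1-indexed). -/
def Hlambda {n : ℕ} (k : ℕ) (gl : ℕ → ℕ) : Set (Finset (Fin n)) :=
  {H | ∃ j, 1 ≤ j ∧ j ≤ k ∧ H.card = gl j}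

/-- Lemma 3: every JM hypergraph is minimal transversal-free. -/

def ind {n : ℕ} (A : Finset (Fin n)) : Fin n → ℕ := fun i => if i ∈ A then 1 else 0

lemma move_sum_lt {n : ℕ} {F : Set (Finset (Fin n))} {x x' : Fin n → ℕ}
    (hnem : ∅ ∉ F) (h : Move F x x') : (∑ i, x' i) < ∑ i, x i := by
  obtain ⟨H, hH, hlt, heq⟩ := h
  obtain ⟨i, hi⟩ := Finset.nonempty_iff_ne_empty.2 (fun e => hnem (e ▸ hH))
  refine Finset.sum_lt_sum (fun j _ => ?_) ⟨i, Finset.mem_univ i, hlt i hi⟩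
  by_cases hj : j ∈ H
  · exact (hlt j hj).le
  · exact (heq j hj).le

lemma grundy_le_sum {n : ℕ} (F : Set (Finset (Fin n))) (x : Fin n → ℕ) :
    grundy F x ≤ ∑ i, x i := by
  generalize hN : (∑ i, x i) = N
  induction N using Nat.strong_induction_on generalizing x with
  | _ N ih =>
    rw [grundy, mex]
    apply Nat.sInf_le
    rintro ⟨x', ⟨hm, hlt⟩, heq⟩
    rw [hN] at hlt
    have := ih _ hlt x' rfl
    omega

lemma tetrisReach_mono {n : ℕ} {F : Set (Finset (Fin n))} {x : Fin n → ℕ} {M N : ℕ}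
    (h : M ≤ N) (hr : TetrisReach F x N) : TetrisReach F x M := by
  obtain ⟨f, h1, h2⟩ := hr
  exact ⟨f, fun j hj => h1 j (hj.trans_le h), fun j hj => h2 j (hj.trans_le h)⟩

lemma tetrisReach_zero {n : ℕ} (F : Set (Finset (Fin n))) (x : Fin n → ℕ) :
    TetrisReach F x 0 := ⟨fun _ => ∅, by simp, by simp⟩

lemma tetrisReach_le_sum {n : ℕ} {F : Set (Finset (Fin n))} {x : Fin n → ℕ} {N : ℕ}
    (hnem : ∅ ∉ F) (hr : TetrisReach F x N) : N ≤ ∑ i, x i := by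
  obtain ⟨f, h1, h2⟩ := hr
  rcases Nat.eq_zero_or_pos N with h | h
  · omega
  have hb := h2 (N - 1) (by omega)
  have key : ∀ l < N, 1 ≤ (f l).card := by
    intro l hl
    exact Finset.card_pos.2 (Finset.nonempty_iff_ne_empty.2 (fun e => hnem (e ▸ h1 l hl)))
  calc N = ∑ l ∈ Finset.range N, 1 := by simp
    _ ≤ ∑ l ∈ Finset.range N, (f l).card := by
        exact Finset.sum_le_sum (fun l hl => key l (Finset.mem_range.1 hl))
    _ = ∑ l ∈ Finset.range N, ∑ i : Fin n, (if i ∈ f l then 1 else 0) := by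
        simp [Finset.sum_boole]
    _ = ∑ i : Fin n, ∑ l ∈ Finset.range N, (if i ∈ f l then 1 else 0) := Finset.sum_comm
    _ ≤ ∑ i, x i := by
        apply Finset.sum_le_sum
        intro i _
        have := hb i
        rwa [Nat.sub_add_cancel h] at this

lemma tetris_bdd {n : ℕ} {F : Set (Finset (Fin n))} (x : Fin n → ℕ) (hnem : ∅ ∉ F) :
    BddAbove {N | TetrisReach F x N} :=
  ⟨∑ i, x i, fun _ hN => tetrisReach_le_sum hnem hN⟩

lemma tetris_pos {n : ℕ} {F : Set (Finset (Fin n))} {x : Fin n → ℕ}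
    (hnem : ∅ ∉ F) (h : TetrisReach F x 1) : 1 ≤ tetris F x :=
  le_csSup (tetris_bdd x hnem) h

lemma tetris_eq_zero_iff {n : ℕ} {F : Set (Finset (Fin n))} {x : Fin n → ℕ}
    (hnem : ∅ ∉ F) : tetris F x = 0 ↔ ¬ TetrisReach F x 1 := by
  constructor
  · intro h h1
    have := tetris_pos hnem h1
    omega
  · intro h
    have : ∀ N ∈ {N | TetrisReach F x N}, N ≤ 0 := by
      intro N hN
      by_contra hc
      exact h (tetrisReach_mono (by omega) hN)
    exact Nat.le_zero.1 (csSup_le ⟨0, tetrisReach_zero F x⟩ this)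

lemma tetrisReach_one_iff {n : ℕ} {F : Set (Finset (Fin n))} {A : Finset (Fin n)} :
    TetrisReach F (ind A) 1 ↔ ∃ H ∈ F, H ⊆ A := by
  constructor
  · rintro ⟨f, h1, h2⟩
    refine ⟨f 0, h1 0 one_pos, fun i hi => ?_⟩
    have := h2 0 one_pos i
    rw [Finset.sum_range_one] at this
    by_contra hA
    simp [hi, ind, hA] at this
  · rintro ⟨H, hH, hsub⟩
    refine ⟨fun _ => H, fun j _ => hH, fun j hj i => ?_⟩
    interval_cases j
    by_cases hi : i ∈ H
    · simp [hi, ind, hsub hi]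
    · simp [hi, ind]

lemma mval_eq_zero {n : ℕ} {x : Fin n → ℕ} {i : Fin n} (h : x i = 0) : mval x = 0 :=
  Nat.sInf_eq_zero.2 (Or.inl ⟨i, h⟩)

-- mex lemmas
lemma zero_mem_of_mex_pos {S : Set ℕ} (h : 1 ≤ mex S) : 0 ∈ S := by
  by_contra h0
  have : mex S ≤ 0 := Nat.sInf_le h0
  omega

lemma not_mem_of_mex_eq_zero {S : Set ℕ} {b : ℕ} (hb : b ∉ S) (h : mex S = 0) : 0 ∉ S := by
  have hne : {g : ℕ | g ∉ S}.Nonempty := ⟨b, hb⟩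
  have := Nat.sInf_mem hne
  rwa [← mex, h] at this

lemma zero_mem_moves_of_grundy_pos {n : ℕ} {F : Set (Finset (Fin n))} {x : Fin n → ℕ}
    (h : 1 ≤ grundy F x) : ∃ x', Move F x x' ∧ grundy F x' = 0 := by
  rw [grundy] at h
  obtain ⟨x', ⟨hm, _⟩, hg⟩ := zero_mem_of_mex_pos h
  exact ⟨x', hm, hg⟩

lemma grundy_succ_ne_zero {n : ℕ} {F : Set (Finset (Fin n))} (hnem : ∅ ∉ F)
    {x x' : Fin n → ℕ} (hmv : Move F x x') (h0 : grundy F x = 0) :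
    grundy F x' ≠ 0 := by
  intro hz
  have hlt := move_sum_lt hnem hmv
  rw [grundy] at h0
  have hb : (∑ i, x i) ∉
      {g : ℕ | ∃ y, ∃ _h : Move F x y ∧ (∑ i, y i) < ∑ i, x i, grundy F y = g} := by
    rintro ⟨y, ⟨_, hlt'⟩, heq⟩
    exact absurd heq ((grundy_le_sum F y).trans_lt hlt').ne
  have hmem0 : (0:ℕ) ∈
      {g : ℕ | ∃ y, ∃ _h : Move F x y ∧ (∑ i, y i) < ∑ i, x i, grundy F y = g} :=
    ⟨x', ⟨hmv, hlt⟩, hz⟩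
  have hnot := not_mem_of_mex_eq_zero hb h0
  exact hnot hmem0

theorem isJM_imp_minTransversalFree
    (n : ℕ) (F : Set (Finset (Fin n))) (hne : F.Nonempty) (hnem : ∅ ∉ F)
    (hJM : IsJM F) : MinTransversalFree F := by
  obtain ⟨H₀, hH₀⟩ := hne
  have hH₀ne : H₀.Nonempty := Finset.nonempty_iff_ne_empty.2 (fun e => hnem (e ▸ hH₀))
  obtain ⟨iw, _⟩ := hH₀ne
  haveI : Nonempty (Fin n) := ⟨iw⟩
  constructor
  · -- transversal-free
    intro H hHF hTrans
    have hHne : H.Nonempty := Finset.nonempty_iff_ne_empty.2 (fun e => hnem (e ▸ hHF))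
    set e : Fin n → ℕ := fun _ => 1 with he
    have hmval_e : mval e = 1 := by
      rw [mval, he, Set.range_const, csInf_singleton]
    have hsub : (fun i => e i - mval e) = (fun _ : Fin n => 0) := by
      funext i; rw [hmval_e]; simp [he]
    have htet0 : tetris F (fun _ : Fin n => 0) = 0 := by
      rw [tetris_eq_zero_iff hnem]
      rintro ⟨f, h1, h2⟩
      obtain ⟨i, hi⟩ : (f 0).Nonempty :=
        Finset.nonempty_iff_ne_empty.2 (fun e' => hnem (e' ▸ h1 0 one_pos))
      have := h2 0 one_pos i
      rw [Finset.sum_range_one] at this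
      simp [hi] at this
    have hy : yval F e = 1 := by rw [yval, hsub, htet0]
    have hU : jmU F e = 0 := by
      rw [jmU, hmval_e, hy]
      norm_num [vval, hmval_e, hy]
    have hge : grundy F e = 0 := (hJM e).trans hU
    set x' := ind Hᶜ with hx'
    have hmove : Move F e x' :=
      ⟨H, hHF, fun i hi => by simp [hx', ind, hi, he], fun i hi => by simp [hx', ind, hi, he]⟩
    have hne0 : grundy F x' ≠ 0 := grundy_succ_ne_zero hnem hmove hge
    obtain ⟨i1, hi1⟩ := hHne
    have hm0 : mval x' = 0 := mval_eq_zero (i := i1) (by simp [hx', ind, hi1])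
    have hUx' : jmU F x' = tetris F x' := by rw [jmU, hm0]; simp
    have htetne : tetris F x' ≠ 0 := by rw [← hUx', ← hJM x']; exact hne0
    have hr1 : TetrisReach F x' 1 := by
      by_contra hc; exact htetne ((tetris_eq_zero_iff hnem).2 hc)
    obtain ⟨H', hH'F, hsub'⟩ := tetrisReach_one_iff.1 hr1
    obtain ⟨i, hi⟩ := hTrans H' hH'F
    rw [Finset.mem_inter] at hi
    exact (Finset.mem_compl.1 (hsub' hi.2)) hi.1
  · -- minimality
    intro S hS hFS hTF
    obtain ⟨HS, hHSF, hHSsub⟩ := hFS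
    obtain ⟨i0, _, hi0S⟩ := Finset.exists_of_ssubset hS
    set x := ind S with hxdef
    have hm0 : mval x = 0 := mval_eq_zero (i := i0) (by simp [hxdef, ind, hi0S])
    have hUx : jmU F x = tetris F x := by rw [jmU, hm0]; simp
    have h1 : 1 ≤ tetris F x :=
      tetris_pos hnem (tetrisReach_one_iff.2 ⟨HS, hHSF, hHSsub⟩)
    have hg1 : 1 ≤ grundy F x := by rw [hJM x, hUx]; exact h1
    obtain ⟨x', ⟨H, hHF, hlt', heq'⟩, hg0⟩ := zero_mem_moves_of_grundy_pos hg1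
    have hHS' : H ⊆ S := by
      intro i hi
      have := hlt' i hi
      by_contra hiS
      simp [hxdef, ind, hiS] at this
    have hx'eq : x' = ind (S \ H) := by
      funext i
      by_cases hiH : i ∈ H
      · have := hlt' i hiH
        simp only [hxdef, ind, hHS' hiH, if_true] at this
        simp [ind, hiH]
        omega
      · rw [heq' i hiH]
        by_cases hiS : i ∈ S <;> simp [hxdef, ind, hiS, hiH]
    have hm0' : mval x' = 0 := mval_eq_zero (i := i0) (by rw [hx'eq]; simp [ind, hi0S])
    have hUx' : jmU F x' = tetris F x' := by rw [jmU, hm0']; simp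
    have ht0 : tetris F x' = 0 := by rw [← hUx', ← hJM]; exact hg0
    rw [hx'eq] at ht0
    have hnoH' : ¬ ∃ H' ∈ F, H' ⊆ S \ H :=
      fun h => ((tetris_eq_zero_iff hnem).1 ht0) (tetrisReach_one_iff.2 h)
    apply hTF H ⟨hHF, hHS'⟩
    intro H' hH'
    by_contra hempty
    exact hnoH' ⟨H', hH'.1, fun i hi => Finset.mem_sdiff.2
      ⟨hH'.2 hi, fun hiH => hempty ⟨i, Finset.mem_inter.2 ⟨hiH, hi⟩⟩⟩⟩
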